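/- Let n, M, N ∈ ℕ and ψ: ℕ → [0,∞) satisfy ψ(2ⁿ)/(125·2ⁿ) ≤ 3^{-N} ≤ 5ψ(2ⁿ)/2ⁿ ≤ 3^{-M} ≤ 2^{9-n}. Let C_L be the set of endpoints of the level-L intervals of the Cantor construction, and for t > 0 let tA_n = ⋃_{a=0}^{2ⁿ} B(a/2ⁿ, t·ψ(2ⁿ)/2ⁿ) and tA_n(M) = ⋃_{a=0}^{2ⁿ} B(a/2ⁿ, t/3^M). Then |C_N ∩ 5A_n| ≤ C·|C_M ∩ 5A_n(M)| for an absolute constant C. -/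
import Mathlib


open Metric Finset

/-- `C_L`: endpoints of the level-`L` Cantor intervals, i.e. rationals in `[0,1]` with
denominator `3^L` lying in the Cantor set. -/
def cantorEndpoints (L : ℕ) : Set ℝ :=
  {x | (∃ b : ℕ, b ≤ 3 ^ L ∧ x = (b : ℝ) / 3 ^ L) ∧ x ∈ cantorSet}

lemma cantorSet_div3 {x : ℝ} (hx : x ∈ cantorSet) : x / 3 ∈ cantorSet := by
  have hx01 : x ∈ Set.Icc (0:ℝ) 1 := cantorSet_subset_unitInterval hx
  refine Set.mem_iInter.mpr fun m => ?_
  cases m with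
  | zero =>
    simp only [preCantorSet_zero, Set.mem_Icc]
    constructor <;> [linarith [hx01.1]; linarith [hx01.2]]
  | succ m => exact Or.inl ⟨x, Set.mem_iInter.mp hx m, rfl⟩

lemma cantorSet_two_add_div3 {x : ℝ} (hx : x ∈ cantorSet) : (2 + x) / 3 ∈ cantorSet := by
  have hx01 : x ∈ Set.Icc (0:ℝ) 1 := cantorSet_subset_unitInterval hx
  refine Set.mem_iInter.mpr fun m => ?_
  cases m with
  | zero =>
    simp only [preCantorSet_zero, Set.mem_Icc]
    constructor <;> [linarith [hx01.1]; linarith [hx01.2]]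
  | succ m => exact Or.inr ⟨x, Set.mem_iInter.mp hx m, rfl⟩

/-- Every point of a pre-Cantor set of level `M` lies within `3⁻ᴹ` (to the right) of a
level-`M` Cantor endpoint. -/
lemma trunc_level (M : ℕ) : ∀ x ∈ preCantorSet M, ∃ b : ℕ, b ≤ 3 ^ M ∧
    ((b:ℝ) / 3 ^ M ∈ cantorSet) ∧ (b:ℝ) / 3 ^ M ≤ x ∧ x ≤ (b:ℝ) / 3 ^ M + ((3:ℝ) ^ M)⁻¹ := by
  induction M with
  | zero =>
    intro x hx
    simp only [preCantorSet_zero, Set.mem_Icc] at hx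
    exact ⟨0, by simp, by simpa using zero_mem_cantorSet, by simpa using hx.1,
      by simp; linarith [hx.2]⟩
  | succ m ih =>
    intro x hx
    have h3m : (0:ℝ) < 3 ^ m := by positivity
    rcases hx with ⟨z, hz, rfl⟩ | ⟨z, hz, rfl⟩
    · obtain ⟨b, hb, hbc, hle, hge⟩ := ih z hz
      have E1 : ((b:ℝ) / 3 ^ (m+1)) = ((b:ℝ) / 3 ^ m) / 3 := by
        rw [pow_succ, div_div]
      have E2 : ((3:ℝ) ^ (m+1))⁻¹ = ((3:ℝ) ^ m)⁻¹ / 3 := by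
        rw [pow_succ, mul_inv, div_eq_mul_inv]
      refine ⟨b, le_trans hb (Nat.pow_le_pow_right (by norm_num) (by omega)), ?_, ?_, ?_⟩
      · rw [E1]; exact cantorSet_div3 hbc
      · rw [E1]; linarith
      · rw [E1, E2]; linarith
    · obtain ⟨b, hb, hbc, hle, hge⟩ := ih z hz
      have E1 : (((2 * 3 ^ m + b : ℕ) : ℝ) / 3 ^ (m+1)) = (2 + (b:ℝ) / 3 ^ m) / 3 := by
        push_cast
        rw [pow_succ]
        field_simp
      have E2 : ((3:ℝ) ^ (m+1))⁻¹ = ((3:ℝ) ^ m)⁻¹ / 3 := by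
        rw [pow_succ, mul_inv, div_eq_mul_inv]
      refine ⟨2 * 3 ^ m + b, ?_, ?_, ?_, ?_⟩
      · have : 3 ^ (m+1) = 2 * 3 ^ m + 3 ^ m := by ring
        omega
      · rw [E1]; exact cantorSet_two_add_div3 hbc
      · rw [E1]; linarith
      · rw [E1, E2]; linarith

/-- Count of naturals `b` with `|b/d - c| < ρ`. -/
lemma natCount (d c ρ : ℝ) (hd : 0 < d) (k : ℕ) (h : 2 * ρ * d ≤ k) :
    {b : ℕ | |(b:ℝ) / d - c| < ρ} ⊆
      ↑(Finset.Ico ⌈d * (c - ρ)⌉₊ (⌈d * (c - ρ)⌉₊ + (k + 1))) := by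
  intro b hb
  simp only [Set.mem_setOf_eq] at hb
  obtain ⟨hl, hr⟩ := abs_lt.mp hb
  have h1 : (b:ℝ) < (c + ρ) * d := (div_lt_iff₀ hd).mp (by linarith)
  have h2 : (c - ρ) * d < (b:ℝ) := (lt_div_iff₀ hd).mp (by linarith)
  simp only [Finset.coe_Ico, Set.mem_Ico]
  constructor
  · exact Nat.ceil_le.mpr (by linarith [h2])
  · have hcl : d * (c - ρ) ≤ (⌈d * (c - ρ)⌉₊ : ℝ) := Nat.le_ceil _
    have : (b:ℝ) < ((⌈d * (c - ρ)⌉₊ + (k + 1) : ℕ) : ℝ) := by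
      push_cast
      nlinarith
    exact_mod_cast this

/-- If every element of `s` has the form `g b` for a natural `b` lying (after scaling) in an
interval of length `≤ k`, then `s` has at most `k + 1` elements. -/
lemma subCount {α : Type*} (s : Set α) (g : ℕ → α) (d c ρ : ℝ) (hd : 0 < d) (k : ℕ)
    (h : 2 * ρ * d ≤ k) (hs : ∀ x ∈ s, ∃ b : ℕ, x = g b ∧ |(b:ℝ) / d - c| < ρ) :
    s.ncard ≤ k + 1 := by
  set B := {b : ℕ | |(b:ℝ) / d - c| < ρ} with hB
  have hBsub := natCount d c ρ hd k h
  have hBfin : B.Finite := Set.Finite.subset (Finset.finite_toSet _) hBsub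
  have hBcard : B.ncard ≤ k + 1 := by
    refine le_trans (Set.ncard_le_ncard hBsub (Finset.finite_toSet _)) ?_
    rw [Set.ncard_coe_finset, Nat.card_Ico]
    omega
  have hsub : s ⊆ g '' B := by
    intro x hx
    obtain ⟨b, hb1, hb2⟩ := hs x hx
    exact ⟨b, hb2, hb1.symm⟩
  calc s.ncard ≤ (g '' B).ncard := Set.ncard_le_ncard hsub (hBfin.image g)
    _ ≤ B.ncard := Set.ncard_image_le hBfin
    _ ≤ k + 1 := hBcard

/-- Fiber counting: if all fibers of `f` on `s` have at most `k` elements then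
`|s| ≤ k * |f '' s|`. -/
lemma keyLem {α β : Type*} (s : Set α) (f : α → β) (k : ℕ) (hs : s.Finite)
    (hfib : ∀ y : β, (s ∩ f ⁻¹' {y}).ncard ≤ k) : s.ncard ≤ k * (f '' s).ncard := by
  classical
  have hcard := Finset.card_le_mul_card_image (f := f) hs.toFinset k ?_
  · have e1 : s.ncard = hs.toFinset.card := by
      exact Set.ncard_eq_toFinset_card s hs
    have e2 : (f '' s).ncard = (hs.toFinset.image f).card := by
      rw [← Set.ncard_coe_finset (hs.toFinset.image f)]
      congr 1
      rw [Finset.coe_image, Set.Finite.coe_toFinset]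
    rw [e1, e2]
    exact hcard
  · intro a _
    have : ((hs.toFinset.filter (fun x => f x = a)) : Set α) = s ∩ f ⁻¹' {a} := by
      ext x
      simp [Set.mem_preimage]
    calc (hs.toFinset.filter (fun x => f x = a)).card
        = ((hs.toFinset.filter (fun x => f x = a)) : Set α).ncard := by
          rw [Set.ncard_coe_finset]
      _ = (s ∩ f ⁻¹' {a}).ncard := by rw [this]
      _ ≤ k := hfib a

lemma cantorEndpoints_finite (L : ℕ) (s : Set ℝ) (hs : s ⊆ cantorEndpoints L) : s.Finite := by
  refine Set.Finite.subset ((Set.finite_Icc (0:ℕ) (3 ^ L)).image (fun b : ℕ => (b:ℝ) / 3 ^ L)) ?_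
  intro x hx
  obtain ⟨⟨b, hb, rfl⟩, -⟩ := hs hx
  exact ⟨b, Set.mem_Icc.mpr ⟨Nat.zero_le _, hb⟩, rfl⟩

/-- If `ψ(2ⁿ)/(125·2ⁿ) ≤ 3^{-N} ≤ 5ψ(2ⁿ)/2ⁿ ≤ 3^{-M} ≤ 2^{9-n}` then
`|C_N ∩ 5A_n| ≤ C·|C_M ∩ 5A_n(M)|` for an absolute constant `C`, where
`5A_n = ⋃_a B(a/2ⁿ, 5ψ(2ⁿ)/2ⁿ)` and `5A_n(M) = ⋃_a B(a/2ⁿ, 5/3^M)`. -/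
theorem dropping_down :
    ∃ C : ℝ, 0 < C ∧ ∀ (ψ : ℕ → ℝ), (∀ i, 0 ≤ ψ i) → ∀ n M N : ℕ,
      ψ (2 ^ n) / (125 * 2 ^ n) ≤ (3:ℝ) ^ (-(N:ℝ)) →
      (3:ℝ) ^ (-(N:ℝ)) ≤ 5 * ψ (2 ^ n) / 2 ^ n →
      5 * ψ (2 ^ n) / 2 ^ n ≤ (3:ℝ) ^ (-(M:ℝ)) →
      (3:ℝ) ^ (-(M:ℝ)) ≤ (2:ℝ) ^ (9 - (n:ℝ)) →
      ((cantorEndpoints N ∩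
          ⋃ a ∈ range (2 ^ n + 1), ball ((a:ℝ) / 2 ^ n) (5 * ψ (2 ^ n) / 2 ^ n)).ncard : ℝ) ≤
        C * ((cantorEndpoints M ∩
          ⋃ a ∈ range (2 ^ n + 1), ball ((a:ℝ) / 2 ^ n) (5 / 3 ^ M)).ncard : ℝ) := by
  refine ⟨2563299, by norm_num, ?_⟩
  intro ψ hψ n M N h1 h2 h3 h4
  have h2n : (0:ℝ) < 2 ^ n := by positivity
  have h3M : (0:ℝ) < 3 ^ M := by positivity
  have h3N : (0:ℝ) < 3 ^ N := by positivity
  have e3M : (3:ℝ) ^ (-(M:ℝ)) = ((3:ℝ) ^ M)⁻¹ := by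
    rw [Real.rpow_neg (by norm_num), Real.rpow_natCast]
  have e3N : (3:ℝ) ^ (-(N:ℝ)) = ((3:ℝ) ^ N)⁻¹ := by
    rw [Real.rpow_neg (by norm_num), Real.rpow_natCast]
  have e2 : (2:ℝ) ^ (9 - (n:ℝ)) = 512 / 2 ^ n := by
    rw [show (9 - (n:ℝ)) = (9:ℝ) - (n:ℝ) by ring, Real.rpow_sub (by norm_num),
      show ((9:ℝ)) = ((9:ℕ):ℝ) by norm_num, Real.rpow_natCast, Real.rpow_natCast]
    norm_num
  set r : ℝ := 5 * ψ (2 ^ n) / 2 ^ n with hrdef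
  have hr0 : 0 ≤ r := div_nonneg (by nlinarith [hψ (2 ^ n)]) (le_of_lt h2n)
  have hrM : r ≤ ((3:ℝ) ^ M)⁻¹ := by rw [e3M] at h3; exact h3
  have hM512 : ((3:ℝ) ^ M)⁻¹ ≤ 512 / 2 ^ n := by rw [e3M, e2] at h4; exact h4
  have hr625 : 2 * r * 3 ^ N ≤ (1250 : ℕ) := by
    rw [e3N] at h1
    have h1' : ψ (2 ^ n) ≤ ((3:ℝ) ^ N)⁻¹ * (125 * 2 ^ n) :=
      (div_le_iff₀ (by positivity)).mp h1
    have hinv : ((3:ℝ) ^ N)⁻¹ * 3 ^ N = 1 := inv_mul_cancel₀ (ne_of_gt h3N)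
    have : r * 3 ^ N ≤ 625 := by
      rw [hrdef]
      rw [div_mul_eq_mul_div, div_le_iff₀ h2n]
      nlinarith [hψ (2 ^ n)]
    push_cast
    linarith
  have hM2048 : 2 * (2 * ((3:ℝ) ^ M)⁻¹) * 2 ^ n ≤ (2048 : ℕ) := by
    have : ((3:ℝ) ^ M)⁻¹ * 2 ^ n ≤ 512 := by
      rw [div_eq_mul_inv] at hM512
      calc ((3:ℝ) ^ M)⁻¹ * 2 ^ n ≤ 512 * ((2:ℝ) ^ n)⁻¹ * 2 ^ n := by
            apply mul_le_mul_of_nonneg_right hM512 (le_of_lt h2n)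
        _ = 512 := by field_simp
    push_cast
    nlinarith
  set S := cantorEndpoints N ∩
      ⋃ a ∈ range (2 ^ n + 1), ball ((a:ℝ) / 2 ^ n) (5 * ψ (2 ^ n) / 2 ^ n) with hSdef
  set T := cantorEndpoints M ∩
      ⋃ a ∈ range (2 ^ n + 1), ball ((a:ℝ) / 2 ^ n) (5 / 3 ^ M) with hTdef
  have hSfin : S.Finite := cantorEndpoints_finite N S (fun x hx => hx.1)
  have hTfin : T.Finite := cantorEndpoints_finite M T (fun x hx => hx.1)
  -- selection of a ball index and a level-M approximation for each point of S
  have hsel : ∀ x : ℝ, ∃ p : ℕ × ℝ, x ∈ S →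
      (p.1 < 2 ^ n + 1 ∧ |x - (p.1:ℝ) / 2 ^ n| < r ∧ p.2 ∈ cantorEndpoints M ∧
        |x - p.2| ≤ ((3:ℝ) ^ M)⁻¹) := by
    intro x
    by_cases hx : x ∈ S
    · obtain ⟨⟨hend, hxc⟩, hxU⟩ := hx
      simp only [Set.mem_iUnion, Finset.mem_range, mem_ball, Real.dist_eq] at hxU
      obtain ⟨a, ha, hax⟩ := hxU
      have hpre : x ∈ preCantorSet M := Set.mem_iInter.mp hxc M
      obtain ⟨b, hb3, hbc, hble, hbge⟩ := trunc_level M x hpre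
      refine ⟨(a, (b:ℝ) / 3 ^ M), fun _ => ⟨ha, hax, ⟨⟨b, hb3, rfl⟩, hbc⟩, ?_⟩⟩
      rw [abs_of_nonneg (by linarith)]
      linarith
    · exact ⟨(0, 0), fun h => absurd h hx⟩
  choose f hf using hsel
  -- step 1: fibers of f on S have at most 1251 elements
  have hfibS : ∀ p : ℕ × ℝ, (S ∩ f ⁻¹' {p}).ncard ≤ 1250 + 1 := by
    intro p
    refine subCount _ (fun b : ℕ => (b:ℝ) / 3 ^ N) (3 ^ N) ((p.1:ℝ) / 2 ^ n) r h3N 1250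
      hr625 ?_
    intro x hx
    obtain ⟨hxS, hxp⟩ := hx
    have hpx : f x = p := hxp
    obtain ⟨ha, hax, -, -⟩ := hf x hxS
    obtain ⟨⟨b, hb, hxb⟩, -⟩ := hxS.1
    refine ⟨b, hxb, ?_⟩
    rw [← hxb, ← hpx]
    exact hax
  have step1 : S.ncard ≤ 1251 * (f '' S).ncard := keyLem S f 1251 hSfin hfibS
  -- step 2: fibers of snd on f '' S have at most 2049 elements
  have hfib2 : ∀ y : ℝ, ((f '' S) ∩ Prod.snd ⁻¹' {y}).ncard ≤ 2048 + 1 := by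
    intro y
    refine subCount _ (fun a : ℕ => ((a, y) : ℕ × ℝ)) (2 ^ n) y (2 * ((3:ℝ) ^ M)⁻¹) h2n 2048
      hM2048 ?_
    rintro p ⟨⟨x, hxS, rfl⟩, hp2⟩
    have hp2' : (f x).2 = y := hp2
    obtain ⟨ha, hax, -, hxy⟩ := hf x hxS
    refine ⟨(f x).1, ?_, ?_⟩
    · rw [← hp2']
    · have t1 : |((f x).1 : ℝ) / 2 ^ n - y| ≤
          |((f x).1 : ℝ) / 2 ^ n - x| + |x - y| := abs_sub_le _ _ _
      have t2 : |((f x).1 : ℝ) / 2 ^ n - x| = |x - ((f x).1 : ℝ) / 2 ^ n| := abs_sub_comm _ _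
      have hxy' : |x - y| ≤ ((3:ℝ) ^ M)⁻¹ := hp2' ▸ hxy
      linarith
  have step2 : (f '' S).ncard ≤ 2049 * (Prod.snd '' (f '' S)).ncard :=
    keyLem (f '' S) Prod.snd 2049 (hSfin.image f) hfib2
  -- the projected image lies in T
  have hsubT : Prod.snd '' (f '' S) ⊆ T := by
    rintro y ⟨p, ⟨x, hxS, rfl⟩, rfl⟩
    obtain ⟨ha, hax, hend, hxy⟩ := hf x hxS
    refine ⟨hend, ?_⟩
    simp only [Set.mem_iUnion, Finset.mem_range, mem_ball, Real.dist_eq]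
    refine ⟨(f x).1, ha, ?_⟩
    have htri : |(f x).2 - ((f x).1 : ℝ) / 2 ^ n| ≤ |(f x).2 - x| + |x - ((f x).1 : ℝ) / 2 ^ n| :=
      abs_sub_le _ _ _
    rw [abs_sub_comm (f x).2 x] at htri
    have h5 : (2:ℝ) * ((3:ℝ) ^ M)⁻¹ < 5 / 3 ^ M := by
      rw [div_eq_mul_inv]
      have : (0:ℝ) < ((3:ℝ) ^ M)⁻¹ := by positivity
      linarith
    calc |(f x).2 - ((f x).1 : ℝ) / 2 ^ n| ≤ |x - (f x).2| + |x - ((f x).1 : ℝ) / 2 ^ n| := htri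
      _ < ((3:ℝ) ^ M)⁻¹ + r := add_lt_add_of_le_of_lt hxy hax
      _ ≤ 2 * ((3:ℝ) ^ M)⁻¹ := by linarith
      _ < 5 / 3 ^ M := h5
  have step3 : (Prod.snd '' (f '' S)).ncard ≤ T.ncard := Set.ncard_le_ncard hsubT hTfin
  have final : S.ncard ≤ 2563299 * T.ncard := by
    calc S.ncard ≤ 1251 * (f '' S).ncard := step1
      _ ≤ 1251 * (2049 * (Prod.snd '' (f '' S)).ncard) := by
          exact Nat.mul_le_mul_left _ step2
      _ ≤ 1251 * (2049 * T.ncard) := by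
          exact Nat.mul_le_mul_left _ (Nat.mul_le_mul_left _ step3)
      _ = 2563299 * T.ncard := by ring
  exact_mod_cast final
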